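/- At each vertex e_j of the simplex, the Jacobian matrix of the vector field F(z) = −z + π(z) (restricted to a neighborhood where defined and extended smoothly) equals −I, the negative identity matrix. In particular all eigenvalues of DF(e_j) equal −1, so e_j is a linearly stable equilibrium. -/

import Mathlib

open Finset

/-- At each vertex `e_j` of the simplex, the Jacobian of `F(z) = -z + π(z)` is `-I`:
the vector field has derivative equal to minus the identity at `e_j`. -/
theorem jacobian_at_vertex (d : ℕ) (hd : 2 ≤ d) (α : ℝ) (hα : 1 < α) (j : Fin d)
    (F : (Fin d → ℝ) → (Fin d → ℝ))
    (hF : ∀ z : Fin d → ℝ, ∀ i, F z i = -(z i) + z i ^ α / (∑ k, z k ^ α)) :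
    HasFDerivAt F (-(ContinuousLinearMap.id ℝ (Fin d → ℝ))) (Pi.single j 1) := by
  have hFeq : F = fun z i => -(z i) + z i ^ α / (∑ k, z k ^ α) := by
    funext z i; exact hF z i
  subst hFeq
  set p : Fin d → ℝ := Pi.single j 1 with hp
  have hpk : ∀ k, p k = if k = j then 1 else 0 := by
    intro k; simp [hp, Pi.single_apply]
  rw [hasFDerivAt_pi']
  intro i
  -- derivative of numerator coordinates
  have numDer : ∀ k : Fin d, HasFDerivAt (fun z : Fin d → ℝ => z k ^ α)
      ((α * p k ^ (α - 1)) • ContinuousLinearMap.proj k (R := ℝ) (φ := fun _ : Fin d => ℝ)) p := by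
    intro k
    exact (Real.hasDerivAt_rpow_const (Or.inr hα.le)).comp_hasFDerivAt p
      (hasFDerivAt_apply k p)
  have sumDer : HasFDerivAt (fun z : Fin d → ℝ => ∑ k, z k ^ α)
      (∑ k, (α * p k ^ (α - 1)) • ContinuousLinearMap.proj k (R := ℝ) (φ := fun _ : Fin d => ℝ)) p := by
    simpa using HasFDerivAt.fun_sum (fun k _ => numDer k)
  have hS : (∑ k, p k ^ α) = 1 := by
    rw [Finset.sum_eq_single j]
    · simp [hpk]
    · intro k _ hk
      rw [hpk k, if_neg hk, Real.zero_rpow (by linarith)]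
    · simp
  have invDer : HasFDerivAt (fun z : Fin d → ℝ => (∑ k, z k ^ α)⁻¹)
      ((-((∑ k, p k ^ α) ^ 2)⁻¹) • (∑ k, (α * p k ^ (α - 1)) • ContinuousLinearMap.proj k (R := ℝ) (φ := fun _ : Fin d => ℝ))) p := by
    exact (hasDerivAt_inv (by rw [hS]; norm_num)).comp_hasFDerivAt p sumDer
  have quotDer := (numDer i).fun_mul invDer
  have projDer : HasFDerivAt (fun z : Fin d → ℝ => z i)
      (ContinuousLinearMap.proj i (R := ℝ) (φ := fun _ : Fin d => ℝ)) p :=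
    hasFDerivAt_apply i p
  have total := projDer.fun_neg.fun_add quotDer
  simp only [div_eq_mul_inv]
  convert total using 1
  ext v
  rw [hS]
  simp only [ContinuousLinearMap.comp_apply, ContinuousLinearMap.neg_apply,
    ContinuousLinearMap.id_apply, ContinuousLinearMap.add_apply,
    ContinuousLinearMap.smul_apply, ContinuousLinearMap.sub_apply,
    ContinuousLinearMap.sum_apply, ContinuousLinearMap.proj_apply]
  have hsum : (∑ k, (α * p k ^ (α - 1)) * v k) = α * v j := by
    rw [Finset.sum_eq_single j]
    · rw [hpk j, if_pos rfl, Real.one_rpow]; ring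
    · intro k _ hk
      rw [hpk k, if_neg hk, Real.zero_rpow (by linarith)]; ring
    · simp
  by_cases hij : i = j
  · subst hij
    rw [hpk i, if_pos rfl]
    simp [hsum, Real.one_rpow]
  · rw [hpk i, if_neg hij, Real.zero_rpow (by linarith), Real.zero_rpow (by linarith)]
    simp
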